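/- For every integer k ≥ 1, the k-th term of the lower central series of the Lie algebra g — defined by C^0(g) = g and C^k(g) = [g, C^{k-1}(g)], the F-linear span of all brackets [x, y] with x ∈ g and y ∈ C^{k-1}(g) — equals the F-linear span of {A^n : n ≥ k+1}. -/

import Mathlib

noncomputable section

inductive HWRel (F : Type) [Field F] :
    FreeAlgebra F (Fin 2) → FreeAlgebra F (Fin 2) → Prop
  | comm : HWRel F (FreeAlgebra.ι F 0 * FreeAlgebra.ι F 1)
      (FreeAlgebra.ι F 1 * FreeAlgebra.ι F 0 + 1)

abbrev HW (F : Type) [Field F] := RingQuot (HWRel F)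

def HW.A (F : Type) [Field F] : HW F :=
  RingQuot.mkAlgHom F (HWRel F) (FreeAlgebra.ι F 0)

def HW.B (F : Type) [Field F] : HW F :=
  RingQuot.mkAlgHom F (HWRel F) (FreeAlgebra.ι F 1)

/-- The Lie subalgebra `g`: the linear span of `{B*A^2} ∪ {A^n : n ≥ 1}`. -/
def hwG (F : Type) [Field F] : Submodule F (HW F) :=
  Submodule.span F ({HW.B F * HW.A F ^ 2} ∪ {x | ∃ n : ℕ, 1 ≤ n ∧ x = HW.A F ^ n})

/-- The lower central series of `g`: `C^0 = g`, `C^{k+1} = span [g, C^k]`. -/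
def hwGlcs (F : Type) [Field F] : ℕ → Submodule F (HW F)
  | 0 => hwG F
  | k + 1 => Submodule.span F {z | ∃ x ∈ hwG F, ∃ y ∈ hwGlcs F k, z = ⁅x, y⁆}

section Aux

variable (F : Type) [Field F]

lemma hw_comm : HW.A F * HW.B F = HW.B F * HW.A F + 1 := by
  have := RingQuot.mkAlgHom_rel F (HWRel.comm (F := F))
  simpa [HW.A, HW.B, map_mul, map_add, map_one] using this

lemma hw_pow_mul_B : ∀ n : ℕ,
    HW.A F ^ (n + 1) * HW.B F
      = HW.B F * HW.A F ^ (n + 1) + ((n : F) + 1) • HW.A F ^ n := by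
  intro n
  induction n with
  | zero => simp [hw_comm F]
  | succ n ih =>
    have : HW.A F ^ (n + 2) * HW.B F = HW.A F ^ (n + 1) * (HW.A F * HW.B F) := by
      rw [← mul_assoc, ← pow_succ]
    rw [this, hw_comm F, mul_add, mul_one, ← mul_assoc, ih, add_mul, smul_mul_assoc,
      mul_assoc, ← pow_succ, ← pow_succ]
    push_cast
    simp [add_smul, add_assoc]

lemma hw_lie_pow_pow (m n : ℕ) : ⁅HW.A F ^ m, HW.A F ^ n⁆ = 0 := by
  rw [Ring.lie_def, ← pow_add, ← pow_add, add_comm, sub_self]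

lemma hw_lie_BA_pow (n : ℕ) :
    ⁅HW.B F * HW.A F ^ 2, HW.A F ^ (n + 1)⁆
      = (-((n : F) + 1)) • HW.A F ^ (n + 2) := by
  have h1 : HW.B F * HW.A F ^ 2 * HW.A F ^ (n + 1) = HW.B F * HW.A F ^ (n + 3) := by
    rw [mul_assoc, ← pow_add]
    ring_nf
  have h2 : HW.A F ^ (n + 1) * (HW.B F * HW.A F ^ 2)
      = HW.B F * HW.A F ^ (n + 3) + ((n : F) + 1) • HW.A F ^ (n + 2) := by
    rw [← mul_assoc, hw_pow_mul_B F n, add_mul, smul_mul_assoc, mul_assoc,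
      ← pow_add, ← pow_add]
  rw [Ring.lie_def, h1, h2]
  module

lemma hw_lie_mem_span (S T : Set (HW F)) {x y : HW F}
    (hx : x ∈ Submodule.span F S) (hy : y ∈ Submodule.span F T) :
    ⁅x, y⁆ ∈ Submodule.span F {z | ∃ s ∈ S, ∃ t ∈ T, z = ⁅s, t⁆} := by
  induction hx using Submodule.span_induction with
  | mem s hs =>
    induction hy using Submodule.span_induction with
    | mem t ht => exact Submodule.subset_span ⟨s, hs, t, ht, rfl⟩
    | zero => simp [Ring.lie_def]
    | add a b _ _ ha hb =>
      rw [show ⁅s, a + b⁆ = ⁅s, a⁆ + ⁅s, b⁆ by simp only [Ring.lie_def, mul_add, add_mul]; abel]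
      exact Submodule.add_mem _ ha hb
    | smul c a _ ha =>
      rw [show ⁅s, c • a⁆ = c • ⁅s, a⁆ by simp only [Ring.lie_def, mul_smul_comm, smul_mul_assoc, smul_sub]]
      exact Submodule.smul_mem _ _ ha
  | zero => simp [Ring.lie_def]
  | add a b _ _ ha hb =>
    rw [show ⁅a + b, y⁆ = ⁅a, y⁆ + ⁅b, y⁆ by simp only [Ring.lie_def, mul_add, add_mul]; abel]
    exact Submodule.add_mem _ ha hb
  | smul c a _ ha =>
    rw [show ⁅c • a, y⁆ = c • ⁅a, y⁆ by simp only [Ring.lie_def, mul_smul_comm, smul_mul_assoc, smul_sub]]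
    exact Submodule.smul_mem _ _ ha

lemma hw_key1 (m : ℕ) {s : HW F}
    (hs : s ∈ ({HW.B F * HW.A F ^ 2} : Set (HW F))
        ∪ {x | ∃ n : ℕ, 1 ≤ n ∧ x = HW.A F ^ n})
    (n : ℕ) (hn : m ≤ n) (hn1 : 1 ≤ n) :
    ⁅s, HW.A F ^ n⁆
      ∈ Submodule.span F {x | ∃ j : ℕ, m + 1 ≤ j ∧ x = HW.A F ^ j} := by
  rcases hs with hs | ⟨j, hj, rfl⟩
  · rw [Set.mem_singleton_iff] at hs
    subst hs
    obtain ⟨p, rfl⟩ : ∃ p, n = p + 1 := ⟨n - 1, by omega⟩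
    rw [hw_lie_BA_pow]
    exact Submodule.smul_mem _ _
      (Submodule.subset_span ⟨p + 2, by omega, rfl⟩)
  · rw [hw_lie_pow_pow]
    exact Submodule.zero_mem _

lemma hw_BA_mem : HW.B F * HW.A F ^ 2 ∈ hwG F :=
  Submodule.subset_span (Or.inl rfl)

lemma hw_rev (Y : Submodule F (HW F)) (n : ℕ) (hn : 1 ≤ n)
    [CharZero F] (hA : HW.A F ^ n ∈ Y) :
    HW.A F ^ (n + 1)
      ∈ Submodule.span F {z | ∃ x ∈ hwG F, ∃ y ∈ Y, z = ⁅x, y⁆} := by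
  obtain ⟨m, rfl⟩ : ∃ m, n = m + 1 := ⟨n - 1, by omega⟩
  have hne : (-((m : F) + 1)) ≠ 0 :=
    neg_ne_zero.mpr (Nat.cast_add_one_ne_zero m)
  have heq : HW.A F ^ (m + 2)
      = (-((m : F) + 1))⁻¹ • ⁅HW.B F * HW.A F ^ 2, HW.A F ^ (m + 1)⁆ := by
    rw [hw_lie_BA_pow, smul_smul, inv_mul_cancel₀ hne, one_smul]
  rw [show m + 1 + 1 = m + 2 from rfl, heq]
  exact Submodule.smul_mem _ _
    (Submodule.subset_span ⟨_, hw_BA_mem F, _, hA, rfl⟩)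

end Aux

/-- For every `k ≥ 1`, the `k`-th term of the lower central series of `g` equals the
linear span of `{A^n : n ≥ k+1}`. -/
theorem hwG_lower_central_series (F : Type) [Field F] [CharZero F] :
    ∀ k : ℕ, 1 ≤ k → hwGlcs F k =
      Submodule.span F {x | ∃ n : ℕ, k + 1 ≤ n ∧ x = HW.A F ^ n} := by
  intro k hk
  induction k, hk using Nat.le_induction with
  | base =>
    apply le_antisymm
    · show Submodule.span F {z | ∃ x ∈ hwG F, ∃ y ∈ hwGlcs F 0, z = ⁅x, y⁆} ≤ _
      apply Submodule.span_le.mpr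
      rintro z ⟨x, hx, y, hy, rfl⟩
      have hy' : y ∈ Submodule.span F
          (({HW.B F * HW.A F ^ 2} : Set (HW F))
            ∪ {x | ∃ n : ℕ, 1 ≤ n ∧ x = HW.A F ^ n}) := hy
      have hx' : x ∈ Submodule.span F
          (({HW.B F * HW.A F ^ 2} : Set (HW F))
            ∪ {x | ∃ n : ℕ, 1 ≤ n ∧ x = HW.A F ^ n}) := hx
      refine Submodule.span_le.mpr ?_ (hw_lie_mem_span F _ _ hx' hy')
      rintro w ⟨s, hs, t, ht, rfl⟩
      rcases ht with ht | ⟨n, hn, rfl⟩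
      · rw [Set.mem_singleton_iff] at ht; subst ht
        rcases hs with hs | ⟨j, hj, rfl⟩
        · rw [Set.mem_singleton_iff] at hs; subst hs
          rw [Ring.lie_def, sub_self]; exact Submodule.zero_mem _
        · rw [show ⁅HW.A F ^ j, HW.B F * HW.A F ^ 2⁆ = -⁅HW.B F * HW.A F ^ 2, HW.A F ^ j⁆ by
            simp only [Ring.lie_def, neg_sub]]
          exact Submodule.neg_mem _ (hw_key1 F 1 (Or.inl rfl) j hj hj)
      · exact hw_key1 F 1 hs n hn hn
    · apply Submodule.span_le.mpr
      rintro x ⟨n, hn, rfl⟩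
      obtain ⟨m, rfl⟩ : ∃ m, n = m + 1 := ⟨n - 1, by omega⟩
      show HW.A F ^ (m + 1) ∈ hwGlcs F 1
      exact hw_rev F (hwG F) m (by omega)
        (Submodule.subset_span (Or.inr ⟨m, by omega, rfl⟩))
  | succ k hk ih =>
    apply le_antisymm
    · show Submodule.span F {z | ∃ x ∈ hwG F, ∃ y ∈ hwGlcs F k, z = ⁅x, y⁆} ≤ _
      apply Submodule.span_le.mpr
      rintro z ⟨x, hx, y, hy, rfl⟩
      rw [ih] at hy
      have hx' : x ∈ Submodule.span F
          (({HW.B F * HW.A F ^ 2} : Set (HW F))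
            ∪ {x | ∃ n : ℕ, 1 ≤ n ∧ x = HW.A F ^ n}) := hx
      refine Submodule.span_le.mpr ?_ (hw_lie_mem_span F _ _ hx' hy)
      rintro w ⟨s, hs, t, ⟨n, hn, rfl⟩, rfl⟩
      exact hw_key1 F (k + 1) hs n hn (by omega)
    · apply Submodule.span_le.mpr
      rintro x ⟨n, hn, rfl⟩
      obtain ⟨m, rfl⟩ : ∃ m, n = m + 1 := ⟨n - 1, by omega⟩
      show HW.A F ^ (m + 1) ∈ hwGlcs F (k + 1)
      have hA : HW.A F ^ m ∈ hwGlcs F k := by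
        rw [ih]; exact Submodule.subset_span ⟨m, by omega, rfl⟩
      exact hw_rev F (hwGlcs F k) m (by omega) hA
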